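/- For every integer g ≥ 2 there exists a polynomial S_g ∈ ℚ[y] of degree at most 2g − 1 such that D( S_g(w) · (1 − 108w)^{−(5g−3)} ) = Ṽ_g + Σ_{k=1}^{g} ( (−1)^k · (2^{1−2k} − 1) · B_{2k} / (2k)! ) · D^{2k}( Ṽ_{g−k} ). (Here (2^{1−2k} − 1)·B_{2k} is the value B_{2k}(1/2) of the (2k)-th Bernoulli polynomial at 1/2; the statement says that the genus-g part 𝒢_g of the auxiliary series equals S_g(w)/(1−108w)^{5g−3} up to an additive constant.) -/

import Mathlib

open PowerSeries
/-- The formal derivative `d/dx` on `ℚ⟦x⟧`. -/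
noncomputable def D : PowerSeries ℚ → PowerSeries ℚ := PowerSeries.derivativeFun
lemma D_mul (f g : ℚ⟦X⟧) : D (f * g) = f * D g + g * D f := by
  unfold D
  simpa [smul_eq_mul] using PowerSeries.derivativeFun_mul f g

lemma D_add (f g : ℚ⟦X⟧) : D (f + g) = D f + D g := PowerSeries.derivativeFun_add f g

lemma D_C (q : ℚ) : D (C q) = 0 := by exact PowerSeries.derivativeFun_C

lemma D_one : D 1 = 0 := PowerSeries.derivativeFun_one

lemma D_X : D (X : ℚ⟦X⟧) = 1 := by
  have := PowerSeries.derivative_X (R := ℚ)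
  exact this

lemma D_natCast (n : ℕ) : D (n : ℚ⟦X⟧) = 0 := by
  have := Derivation.map_natCast (PowerSeries.derivative ℚ) n
  exact this

lemma D_eq_deriv : D = ⇑(PowerSeries.derivative ℚ) := rfl

lemma D_aeval (w : ℚ⟦X⟧) (p : Polynomial ℚ) :
    D (Polynomial.aeval w p) = Polynomial.aeval w (Polynomial.derivative p) * D w := by
  rw [D_eq_deriv]
  simpa [smul_eq_mul] using Derivation.comp_aeval_eq (PowerSeries.derivative ℚ) w p

lemma D_smulC (q : ℚ) (f : ℚ⟦X⟧) : D (C q * f) = C q * D f := by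
  rw [D_mul, D_C, mul_zero, add_zero]

def EV (w t : ℚ⟦X⟧) (n d : ℕ) (s : ℚ⟦X⟧) : Prop :=
  ∃ p : Polynomial ℚ, p.natDegree ≤ d ∧ s = Polynomial.aeval w p * t ^ n
def OD (w y t : ℚ⟦X⟧) (n d : ℕ) (s : ℚ⟦X⟧) : Prop :=
  ∃ p : Polynomial ℚ, p.natDegree ≤ d ∧ s = y * (Polynomial.aeval w p * t ^ n)
section Struct

variable {w y t : ℚ⟦X⟧}

lemma upoly : Polynomial.aeval w (1 - 108 * Polynomial.X : Polynomial ℚ) = 1 - 108 * w := by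
  simp [map_ofNat]

lemma EV.add {n d s₁ s₂} (h₁ : EV w t n d s₁) (h₂ : EV w t n d s₂) : EV w t n d (s₁ + s₂) := by
  obtain ⟨p, hp, rfl⟩ := h₁; obtain ⟨q, hq, rfl⟩ := h₂
  exact ⟨p + q, le_trans (Polynomial.natDegree_add_le p q) (max_le hp hq),
    by rw [map_add, add_mul]⟩

lemma OD.add {n d s₁ s₂} (h₁ : OD w y t n d s₁) (h₂ : OD w y t n d s₂) :
    OD w y t n d (s₁ + s₂) := by
  obtain ⟨p, hp, rfl⟩ := h₁; obtain ⟨q, hq, rfl⟩ := h₂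
  exact ⟨p + q, le_trans (Polynomial.natDegree_add_le p q) (max_le hp hq),
    by rw [map_add, add_mul, mul_add]⟩

lemma EV.zero {n d} : EV w t n d 0 := ⟨0, by simp, by simp⟩

lemma OD.zero {n d} : OD w y t n d 0 := ⟨0, by simp, by simp⟩

lemma EV.smul {n d s} (q : ℚ) (h : EV w t n d s) : EV w t n d (C q * s) := by
  obtain ⟨p, hp, rfl⟩ := h
  refine ⟨Polynomial.C q * p, le_trans (Polynomial.natDegree_mul_le) (by simp [hp]), ?_⟩
  rw [map_mul, Polynomial.aeval_C, ← PowerSeries.C_eq_algebraMap]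
  ring

lemma OD.smul {n d s} (q : ℚ) (h : OD w y t n d s) : OD w y t n d (C q * s) := by
  obtain ⟨p, hp, rfl⟩ := h
  refine ⟨Polynomial.C q * p, le_trans (Polynomial.natDegree_mul_le) (by simp [hp]), ?_⟩
  rw [map_mul]
  rw [Polynomial.aeval_C, ← PowerSeries.C_eq_algebraMap]
  ring

lemma EV.sum {ι : Type*} {F : Finset ι} {f : ι → ℚ⟦X⟧} {n d}
    (h : ∀ i ∈ F, EV w t n d (f i)) : EV w t n d (∑ i ∈ F, f i) := by
  classical
  induction F using Finset.induction_on with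
  | empty => simpa using EV.zero
  | insert _ _ hx ih =>
    rw [Finset.sum_insert hx]
    exact (h _ (Finset.mem_insert_self _ _)).add
      (ih fun i hi => h i (Finset.mem_insert_of_mem hi))

lemma OD.sum {ι : Type*} {F : Finset ι} {f : ι → ℚ⟦X⟧} {n d}
    (h : ∀ i ∈ F, OD w y t n d (f i)) : OD w y t n d (∑ i ∈ F, f i) := by
  classical
  induction F using Finset.induction_on with
  | empty => simpa using OD.zero
  | insert _ _ hx ih =>
    rw [Finset.sum_insert hx]
    exact (h _ (Finset.mem_insert_self _ _)).add
      (ih fun i hi => h i (Finset.mem_insert_of_mem hi))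

lemma EV.mono {n d d' s} (hd : d ≤ d') (h : EV w t n d s) : EV w t n d' s := by
  obtain ⟨p, hp, rfl⟩ := h; exact ⟨p, hp.trans hd, rfl⟩

lemma OD.mono {n d d' s} (hd : d ≤ d') (h : OD w y t n d s) : OD w y t n d' s := by
  obtain ⟨p, hp, rfl⟩ := h; exact ⟨p, hp.trans hd, rfl⟩

variable (hut : (1 - 108 * w) * t = 1)

include hut in
lemma EV.up {n d s} (h : EV w t n d s) : EV w t (n + 1) (d + 1) s := by
  obtain ⟨p, hp, rfl⟩ := h
  refine ⟨(1 - 108 * Polynomial.X) * p, ?_, ?_⟩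
  · refine le_trans (Polynomial.natDegree_mul_le) ?_
    have h1 : (1 - 108 * Polynomial.X : Polynomial ℚ).natDegree ≤ 1 := by compute_degree
    omega
  · rw [map_mul, upoly]
    calc Polynomial.aeval w p * t ^ n
        = ((1 - 108 * w) * t) * (Polynomial.aeval w p * t ^ n) := by rw [hut, one_mul]
      _ = (1 - 108 * w) * Polynomial.aeval w p * t ^ (n + 1) := by ring

include hut in
lemma OD.up {n d s} (h : OD w y t n d s) : OD w y t (n + 1) (d + 1) s := by
  obtain ⟨p, hp, rfl⟩ := h
  obtain ⟨q, hq, h2⟩ := (EV.up hut ⟨p, hp, rfl⟩ : EV w t (n+1) (d+1) (Polynomial.aeval w p * t ^ n))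
  exact ⟨q, hq, by rw [h2]⟩

include hut in
lemma EV.lift {n d s} (h : EV w t n d s) (m : ℕ) {n' d'} (hn : n + m = n') (hd : d + m ≤ d') :
    EV w t n' d' s := by
  induction m generalizing n' d' with
  | zero => subst hn; exact h.mono (by omega)
  | succ k ih =>
    have hh := (ih (n' := n + k) (d' := d + k) rfl le_rfl).up hut
    have : n + k + 1 = n' := by omega
    subst this
    exact hh.mono (by omega)

include hut in
lemma OD.lift {n d s} (h : OD w y t n d s) (m : ℕ) {n' d'} (hn : n + m = n') (hd : d + m ≤ d') :
    OD w y t n' d' s := by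
  induction m generalizing n' d' with
  | zero => subst hn; exact h.mono (by omega)
  | succ k ih =>
    have hh := (ih (n' := n + k) (d' := d + k) rfl le_rfl).up hut
    have : n + k + 1 = n' := by omega
    subst this
    exact hh.mono (by omega)

lemma EV.mul {n₁ d₁ n₂ d₂ s₁ s₂} (h₁ : EV w t n₁ d₁ s₁) (h₂ : EV w t n₂ d₂ s₂) :
    EV w t (n₁ + n₂) (d₁ + d₂) (s₁ * s₂) := by
  obtain ⟨p, hp, rfl⟩ := h₁; obtain ⟨q, hq, rfl⟩ := h₂
  exact ⟨p * q, le_trans (Polynomial.natDegree_mul_le) (by omega),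
    by rw [map_mul, pow_add]; ring⟩

lemma EV.mul_od {n₁ d₁ n₂ d₂ s₁ s₂} (h₁ : EV w t n₁ d₁ s₁) (h₂ : OD w y t n₂ d₂ s₂) :
    OD w y t (n₁ + n₂) (d₁ + d₂) (s₁ * s₂) := by
  obtain ⟨p, hp, rfl⟩ := h₁; obtain ⟨q, hq, rfl⟩ := h₂
  exact ⟨p * q, le_trans (Polynomial.natDegree_mul_le) (by omega),
    by rw [map_mul, pow_add]; ring⟩

variable (hy2 : y * y = 1 - 72 * w)

include hy2 in
lemma OD.mul_od {n₁ d₁ n₂ d₂ s₁ s₂} (h₁ : OD w y t n₁ d₁ s₁) (h₂ : OD w y t n₂ d₂ s₂) :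
    EV w t (n₁ + n₂) (d₁ + d₂ + 1) (s₁ * s₂) := by
  obtain ⟨p, hp, rfl⟩ := h₁; obtain ⟨q, hq, rfl⟩ := h₂
  refine ⟨(1 - 72 * Polynomial.X) * (p * q), ?_, ?_⟩
  · refine le_trans (Polynomial.natDegree_mul_le) ?_
    have h1 : (1 - 72 * Polynomial.X : Polynomial ℚ).natDegree ≤ 1 := by compute_degree
    have h2 : (p * q).natDegree ≤ d₁ + d₂ := le_trans (Polynomial.natDegree_mul_le) (by omega)
    omega
  · have : (y * (Polynomial.aeval w p * t ^ n₁)) * (y * (Polynomial.aeval w q * t ^ n₂))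
        = (y * y) * (Polynomial.aeval w p * Polynomial.aeval w q * t ^ (n₁ + n₂)) := by
      rw [pow_add]; ring
    rw [this, hy2, map_mul, map_mul]
    have : Polynomial.aeval w (1 - 72 * Polynomial.X : Polynomial ℚ) = 1 - 72 * w := by simp [map_ofNat]
    rw [this]; ring

end Struct

section S
variable {w y t : ℚ⟦X⟧}

/-- numerator polynomial of `D (p(w) tⁿ)`. -/
noncomputable def evD (n : ℕ) (p : Polynomial ℚ) : Polynomial ℚ :=
  Polynomial.derivative p * (1 - 108 * Polynomial.X) + Polynomial.C (108 * n : ℚ) * p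

/-- numerator polynomial of `D (y p(w) tⁿ)`. -/
noncomputable def odD (n : ℕ) (p : Polynomial ℚ) : Polynomial ℚ :=
  (1 - 72 * Polynomial.X) * evD n p - Polynomial.C 36 * p * (1 - 108 * Polynomial.X)

lemma natDegree_deriv_mul_le {p : Polynomial ℚ} {d : ℕ} (hp : p.natDegree ≤ d) :
    (Polynomial.derivative p * (1 - 108 * Polynomial.X)).natDegree ≤ d := by
  rcases Nat.eq_zero_or_pos d with hd | hd
  · have : p = Polynomial.C (p.coeff 0) := Polynomial.eq_C_of_natDegree_le_zero (by omega)
    rw [this]; simp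
  · refine le_trans Polynomial.natDegree_mul_le ?_
    have h1 : (Polynomial.derivative p).natDegree ≤ d - 1 :=
      le_trans (Polynomial.natDegree_derivative_le p) (by omega)
    have h2 : (1 - 108 * Polynomial.X : Polynomial ℚ).natDegree ≤ 1 := by compute_degree
    omega

lemma natDegree_evD {n : ℕ} {p : Polynomial ℚ} {d : ℕ} (hp : p.natDegree ≤ d) :
    (evD n p).natDegree ≤ d := by
  refine le_trans (Polynomial.natDegree_add_le _ _) (max_le (natDegree_deriv_mul_le hp) ?_)
  refine le_trans Polynomial.natDegree_mul_le ?_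
  rw [Polynomial.natDegree_C]
  omega

lemma natDegree_odD {n : ℕ} {p : Polynomial ℚ} {d : ℕ} (hp : p.natDegree ≤ d) :
    (odD n p).natDegree ≤ d + 1 := by
  refine le_trans (Polynomial.natDegree_sub_le _ _) (max_le ?_ ?_)
  · refine le_trans Polynomial.natDegree_mul_le ?_
    have h1 : (1 - 72 * Polynomial.X : Polynomial ℚ).natDegree ≤ 1 := by compute_degree
    have := natDegree_evD (n := n) hp
    omega
  · refine le_trans Polynomial.natDegree_mul_le ?_
    have h1 : (Polynomial.C 36 * p : Polynomial ℚ).natDegree ≤ d :=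
      le_trans Polynomial.natDegree_mul_le (by simp [hp])
    have h2 : (1 - 108 * Polynomial.X : Polynomial ℚ).natDegree ≤ 1 := by compute_degree
    omega

variable (hut : (1 - 108 * w) * t = 1) (hy2 : y * y = 1 - 72 * w)
  (hDw : D w = y * t) (hDy : D y = -36 * t) (hDt : D t = 108 * y * t ^ 3)

include hDt in
lemma D_tpow (n : ℕ) : D (t ^ n) = C (108 * n : ℚ) * (y * t ^ (n + 2)) := by
  induction n with
  | zero =>
    have : (t : ℚ⟦X⟧) ^ 0 = 1 := pow_zero t
    rw [this]
    have h1 : D (1 : ℚ⟦X⟧) = 0 := PowerSeries.derivativeFun_one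
    rw [h1]
    simp
  | succ n ih =>
    rw [pow_succ, D_mul, hDt, ih]
    have hC : C (108 * (n + 1 : ℕ) : ℚ) = C (108 * n : ℚ) + C (108 : ℚ) := by
      rw [← map_add]; congr 1; push_cast; ring
    rw [hC]
    have h108 : (C (R := ℚ)) 108 = (108 : ℚ⟦X⟧) := by simp [map_ofNat]
    rw [add_mul, h108]
    ring

include hut hDw hDt in
lemma D_ev_eq (n : ℕ) (p : Polynomial ℚ) :
    D (Polynomial.aeval w p * t ^ n) = y * (Polynomial.aeval w (evD n p) * t ^ (n + 2)) := by
  rw [D_mul, D_tpow hDt, D_aeval, hDw]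
  have h4 : Polynomial.aeval w (evD n p)
      = Polynomial.aeval w (Polynomial.derivative p) * (1 - 108 * w)
        + C (108 * n : ℚ) * Polynomial.aeval w p := by
    simp only [evD, map_add, map_mul, map_sub, map_one, Polynomial.aeval_X,
      Polynomial.aeval_C, ← PowerSeries.C_eq_algebraMap, map_ofNat]
  rw [h4]
  have ht : (t : ℚ⟦X⟧) ^ (n + 1) = (1 - 108 * w) * t ^ (n + 2) := by
    calc t ^ (n+1) = ((1 - 108 * w) * t) * t ^ (n + 1) := by rw [hut, one_mul]
    _ = (1 - 108 * w) * t ^ (n + 2) := by ring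
  calc Polynomial.aeval w p * (C (108 * n : ℚ) * (y * t ^ (n + 2)))
        + t ^ n * (Polynomial.aeval w (Polynomial.derivative p) * (y * t))
      = y * ((Polynomial.aeval w (Polynomial.derivative p) * t ^ (n+1))
          + C (108 * n : ℚ) * Polynomial.aeval w p * t ^ (n+2)) := by ring
    _ = y * ((Polynomial.aeval w (Polynomial.derivative p) * (1 - 108 * w)
          + C (108 * n : ℚ) * Polynomial.aeval w p) * t ^ (n + 2)) := by rw [ht]; ring

include hut hy2 hDw hDy hDt in
lemma D_od_eq (n : ℕ) (p : Polynomial ℚ) :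
    D (y * (Polynomial.aeval w p * t ^ n))
      = Polynomial.aeval w (odD n p) * t ^ (n + 2) := by
  rw [D_mul, D_ev_eq hut hDw hDt, hDy]
  have h4 : Polynomial.aeval w (odD n p)
      = (1 - 72 * w) * Polynomial.aeval w (evD n p)
        - 36 * Polynomial.aeval w p * (1 - 108 * w) := by
    simp only [odD, map_sub, map_mul, map_one, Polynomial.aeval_X,
      Polynomial.aeval_C, ← PowerSeries.C_eq_algebraMap, map_ofNat]
  rw [h4]
  have ht : (t : ℚ⟦X⟧) ^ (n + 1) = (1 - 108 * w) * t ^ (n + 2) := by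
    calc t ^ (n+1) = ((1 - 108 * w) * t) * t ^ (n + 1) := by rw [hut, one_mul]
    _ = (1 - 108 * w) * t ^ (n + 2) := by ring
  calc y * (y * (Polynomial.aeval w (evD n p) * t ^ (n + 2)))
        + Polynomial.aeval w p * t ^ n * (-36 * t)
      = (y * y) * Polynomial.aeval w (evD n p) * t ^ (n+2)
          - 36 * Polynomial.aeval w p * t ^ (n+1) := by ring
    _ = _ := by rw [ht, hy2]; ring

include hut hDw hDt in
lemma EV.D' {n d s} (h : EV w t n d s) : OD w y t (n + 2) d (D s) := by
  obtain ⟨p, hp, rfl⟩ := h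
  exact ⟨evD n p, natDegree_evD hp, D_ev_eq hut hDw hDt n p⟩

include hut hy2 hDw hDy hDt in
lemma OD.D' {n d s} (h : OD w y t n d s) : EV w t (n + 2) (d + 1) (D s) := by
  obtain ⟨p, hp, rfl⟩ := h
  exact ⟨odD n p, natDegree_odD hp, D_od_eq hut hy2 hDw hDy hDt n p⟩

include hut hy2 hDw hDy hDt in
lemma OD.D2k {n d s} (h : OD w y t n d s) (k : ℕ) :
    OD w y t (n + 4 * k) (d + k) (D^[2 * k] s) := by
  induction k generalizing n d s with
  | zero => simpa using h
  | succ k ih =>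
    have h2 : D^[2 * (k+1)] s = D^[2 * k] (D (D s)) := by
      have e : 2 * (k + 1) = 2 * k + 2 := by omega
      rw [e, Function.iterate_add_apply]
      rfl
    rw [h2]
    have hDD : OD w y t (n + 4) (d + 1) (D (D s)) := by
      have := (h.D' hut hy2 hDw hDy hDt).D' hut hDw hDt
      have e1 : n + 2 + 2 = n + 4 := by omega
      rwa [e1] at this
    have := ih hDD
    have e2 : n + 4 + 4 * k = n + 4 * (k + 1) := by omega
    have e3 : d + 1 + k = d + (k + 1) := by omega
    rwa [e2, e3] at this

include hut hy2 hDw hDy hDt in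
lemma EV.D2k {n d s} (h : EV w t n d s) (k : ℕ) :
    EV w t (n + 4 * k) (d + k) (D^[2 * k] s) := by
  induction k generalizing n d s with
  | zero => simpa using h
  | succ k ih =>
    have h2 : D^[2 * (k+1)] s = D^[2 * k] (D (D s)) := by
      have e : 2 * (k + 1) = 2 * k + 2 := by omega
      rw [e, Function.iterate_add_apply]
      rfl
    rw [h2]
    have hDD : EV w t (n + 4) (d + 1) (D (D s)) := by
      have := ((h.D' hut hDw hDt).D' hut hy2 hDw hDy hDt : EV w t (n + 2 + 2) (d + 1) _)
      have e1 : n + 2 + 2 = n + 4 := by omega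
      rwa [e1] at this
    have := ih hDD
    have e2 : n + 4 + 4 * k = n + 4 * (k + 1) := by omega
    have e3 : d + 1 + k = d + (k + 1) := by omega
    rwa [e2, e3] at this

include hut hy2 hDw hDy hDt in
lemma EV.D2k1 {n d s} (h : EV w t n d s) (k : ℕ) :
    OD w y t (n + 4 * k + 2) (d + k) (D^[2 * k + 1] s) := by
  have h1 : D^[2 * k + 1] s = D^[2 * k] (D^[1] s) := Function.iterate_add_apply D (2*k) 1 s
  rw [h1]
  have := (h.D' hut hDw hDt).D2k hut hy2 hDw hDy hDt k
  have e : n + 2 + 4 * k = n + 4 * k + 2 := by omega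
  rwa [e] at this


include hut in
lemma OD.mul_t {n d s} (h : OD w y t n d s) : OD w y t (n + 1) d (s * t) := by
  obtain ⟨p, hp, rfl⟩ := h
  exact ⟨p, hp, by rw [pow_succ]; ring⟩

include hut in
lemma EV.mul_t {n d s} (h : EV w t n d s) : EV w t (n + 1) d (s * t) := by
  obtain ⟨p, hp, rfl⟩ := h
  exact ⟨p, hp, by rw [pow_succ]; ring⟩

lemma EV.ymul {n d s} (h : EV w t n d s) : OD w y t n d (y * s) := by
  obtain ⟨p, hp, rfl⟩ := h
  exact ⟨p, hp, rfl⟩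

include hy2 in
lemma OD.ymul {n d s} (h : OD w y t n d s) : EV w t n (d + 1) (y * s) := by
  obtain ⟨p, hp, rfl⟩ := h
  refine ⟨(1 - 72 * Polynomial.X) * p, ?_, ?_⟩
  · refine le_trans Polynomial.natDegree_mul_le ?_
    have h1 : (1 - 72 * Polynomial.X : Polynomial ℚ).natDegree ≤ 1 := by compute_degree
    omega
  · have h2 : Polynomial.aeval w (1 - 72 * Polynomial.X : Polynomial ℚ) = 1 - 72 * w := by
      simp [map_ofNat]
    rw [map_mul, h2, ← mul_assoc, ← hy2]
    ring

include hut hy2 hDw hDy hDt in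
lemma OD.D2k1 {n d s} (h : OD w y t n d s) (k : ℕ) :
    EV w t (n + 4 * k + 2) (d + k + 1) (D^[2 * k + 1] s) := by
  have h1 : D^[2 * k + 1] s = D^[2 * k] (D^[1] s) := Function.iterate_add_apply D (2*k) 1 s
  rw [h1]
  have h2 : D^[1] s = D s := rfl
  rw [h2]
  have := (h.D' hut hy2 hDw hDy hDt).D2k hut hy2 hDw hDy hDt k
  have e : n + 2 + 4 * k = n + 4 * k + 2 := by omega
  have e2 : d + 1 + k = d + k + 1 := by omega
  rwa [e, e2] at this

end S

section Main

variable {v w y t : ℚ⟦X⟧} {V W : ℕ → ℚ⟦X⟧}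

/-- All the differential-algebra facts we need, bundled. -/
structure Ctx (v w y t : ℚ⟦X⟧) : Prop where
  hyv : y = 1 - 6 * v
  hut : (1 - 108 * w) * t = 1
  hy2 : y * y = 1 - 72 * w
  hDw : D w = y * t
  hDy : D y = -36 * t
  hDt : D t = 108 * y * t ^ 3
  hDv : D v = 6 * t

variable (hc : Ctx v w y t)

include hc in
lemma EV_w : EV w t 0 1 w := ⟨Polynomial.X, Polynomial.natDegree_X_le, by simp⟩

include hc in
lemma OD_Dw : OD w y t 1 0 (D w) := by
  refine ⟨1, by simp, ?_⟩
  rw [hc.hDw]; simp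

include hc in
lemma EV_Dv : EV w t 1 0 (D v) := by
  refine ⟨Polynomial.C 6, by simp, ?_⟩
  rw [hc.hDv, Polynomial.aeval_C, ← PowerSeries.C_eq_algebraMap]
  have : (C (R := ℚ)) (6:ℚ) = (6 : ℚ⟦X⟧) := by simp [map_ofNat]
  rw [this, pow_one]

include hc in
/-- `D^[2k] w` for `k ≥ 1`. -/
lemma EV_D2k_w {k : ℕ} (hk : 1 ≤ k) : EV w t (4 * k - 1) k (D^[2 * k] w) := by
  have e : 2 * k = (2 * (k - 1) + 1) + 1 := by omega
  rw [e, Function.iterate_add_apply]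
  have h2 : D^[1] w = D w := rfl
  rw [h2]
  have := (OD_Dw hc).D2k1 hc.hut hc.hy2 hc.hDw hc.hDy hc.hDt (k - 1)
  have e1 : 1 + 4 * (k - 1) + 2 = 4 * k - 1 := by omega
  have e2 : 0 + (k - 1) + 1 = k := by omega
  rwa [e1, e2] at this

include hc in
/-- `D^[2k] v` for `k ≥ 1`. -/
lemma OD_D2k_v {k : ℕ} (hk : 1 ≤ k) : OD w y t (4 * k - 1) (k - 1) (D^[2 * k] v) := by
  have e : 2 * k = (2 * (k - 1) + 1) + 1 := by omega
  rw [e, Function.iterate_add_apply]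
  have h2 : D^[1] v = D v := rfl
  rw [h2]
  have := (EV_Dv hc).D2k1 hc.hut hc.hy2 hc.hDw hc.hDy hc.hDt (k - 1)
  have e1 : 1 + 4 * (k - 1) + 2 = 4 * k - 1 := by omega
  have e2 : 0 + (k - 1) = k - 1 := by omega
  rwa [e1, e2] at this

lemma C3 : (3 : ℚ⟦X⟧) = C 3 := (map_ofNat (C (R := ℚ)) 3).symm
lemma C6 : (6 : ℚ⟦X⟧) = C 6 := (map_ofNat (C (R := ℚ)) 6).symm

include hc in
/-- The key structure theorem: `V g = y·aₘ(w)·t^{5g-1}` and `W g = bₘ(w)·t^{5g-1}`. -/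
lemma struct_all (hV0 : V 0 = v) (hW0 : W 0 = w)
    (hVg : ∀ g, 1 ≤ g →
      V g = 3 * ∑ p ∈ Finset.HasAntidiagonal.antidiagonal g, V p.1 * V p.2
        + 6 * ∑ p ∈ Finset.HasAntidiagonal.antidiagonal g,
            C (1 / ((4 : ℚ) ^ p.1 * (2 * p.1).factorial)) * D^[2 * p.1] (W p.2))
    (hWg : ∀ g, 1 ≤ g →
      W g = 6 * ∑ p ∈ Finset.HasAntidiagonal.antidiagonal g, ∑ r ∈ Finset.HasAntidiagonal.antidiagonal p.2,
            C (1 / ((4 : ℚ) ^ p.1 * (2 * p.1).factorial)) * (W r.1 * D^[2 * p.1] (V r.2))) :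
    ∀ g, 1 ≤ g → OD w y t (5 * g - 1) (2 * g - 1) (V g) ∧ EV w t (5 * g - 1) (2 * g) (W g) := by
  intro g
  induction g using Nat.strong_induction_on with
  | _ g ih =>
  intro hg1
  classical
  -- the erased index sets
  set E1 : Finset (ℕ × ℕ) := (Finset.HasAntidiagonal.antidiagonal g).erase ((0 : ℕ), g) with hE1def
  set E2 : Finset (ℕ × ℕ) := E1.erase (g, (0 : ℕ)) with hE2def
  have hmem0g : ((0 : ℕ), g) ∈ Finset.HasAntidiagonal.antidiagonal g := by simp
  have hmemg0 : ((g : ℕ), (0 : ℕ)) ∈ E1 := by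
    rw [hE1def]
    refine Finset.mem_erase.mpr ⟨?_, by simp⟩
    simp only [ne_eq, Prod.mk.injEq, not_and]
    intro h; omega
  -- membership facts
  have hE1fact : ∀ p : ℕ × ℕ, p ∈ E1 → 1 ≤ p.1 ∧ p.1 + p.2 = g := by
    intro p hp
    rw [hE1def] at hp
    obtain ⟨hne, hmem⟩ := Finset.mem_erase.mp hp
    have h12 : p.1 + p.2 = g := Finset.HasAntidiagonal.mem_antidiagonal.mp hmem
    refine ⟨?_, h12⟩
    rcases Nat.eq_zero_or_pos p.1 with h0 | h0
    · exfalso; apply hne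
      have h2 : p.2 = g := by omega
      exact Prod.ext h0 h2
    · omega
  have hE2fact : ∀ p : ℕ × ℕ, p ∈ E2 → 1 ≤ p.1 ∧ 1 ≤ p.2 ∧ p.1 + p.2 = g := by
    intro p hp
    rw [hE2def] at hp
    obtain ⟨hne, hmem⟩ := Finset.mem_erase.mp hp
    obtain ⟨hp1, h12⟩ := hE1fact p hmem
    refine ⟨hp1, ?_, h12⟩
    rcases Nat.eq_zero_or_pos p.2 with h0 | h0
    · exfalso; apply hne
      have h2 : p.1 = g := by omega
      exact Prod.ext h2 h0
    · omega
  -- define A and B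
  set A : ℚ⟦X⟧ := 3 * (∑ p ∈ E2, V p.1 * V p.2)
      + 6 * (∑ p ∈ E1, C (1 / ((4 : ℚ) ^ p.1 * (2 * p.1).factorial)) * D^[2 * p.1] (W p.2))
    with hAdef
  set B : ℚ⟦X⟧ := 6 * ((∑ r ∈ E2, W r.1 * V r.2)
      + ∑ p ∈ E1, ∑ r ∈ Finset.HasAntidiagonal.antidiagonal p.2,
          C (1 / ((4 : ℚ) ^ p.1 * (2 * p.1).factorial)) * (W r.1 * D^[2 * p.1] (V r.2)))
    with hBdef
  -- equation 1 : y * V g = 6 * W g + A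
  have eq1 : y * V g = 6 * W g + A := by
    have h := hVg g hg1
    rw [← Finset.add_sum_erase _ _ hmem0g, ← hE1def] at h
    rw [← Finset.add_sum_erase _ _ hmem0g, ← hE1def] at h
    rw [← Finset.add_sum_erase _ _ hmemg0, ← hE2def] at h
    simp only [pow_zero, mul_zero, Nat.factorial_zero, Nat.cast_one, one_mul, div_one,
      map_one, Function.iterate_zero, id_eq] at h
    rw [hV0] at h
    rw [hc.hyv]
    linear_combination h - hAdef
  -- equation 2 : y * W g = 6 * w * V g + B
  have eq2 : y * W g = 6 * w * V g + B := by
    have h := hWg g hg1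
    rw [← Finset.add_sum_erase _ _ hmem0g, ← hE1def] at h
    simp only [pow_zero, mul_zero, Nat.factorial_zero, Nat.cast_one, one_mul, div_one,
      map_one, Function.iterate_zero, id_eq] at h
    rw [← Finset.add_sum_erase _ _ hmem0g, ← hE1def] at h
    rw [← Finset.add_sum_erase _ _ hmemg0, ← hE2def] at h
    rw [hV0, hW0] at h
    rw [hc.hyv]
    linear_combination h - hBdef
  -- structure of A
  have hA : EV w t (5*g-2) (2*g-1) A := by
    rw [hAdef, C3, C6]
    apply EV.add
    · apply EV.smul
      apply EV.sum
      intro p hp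
      obtain ⟨hp1, hp2, hpg⟩ := hE2fact p hp
      have h1 := (ih p.1 (by omega) (by omega)).1
      have h2 := (ih p.2 (by omega) (by omega)).1
      have h3 := h1.mul_od hc.hy2 h2
      have e1 : 5*p.1-1 + (5*p.2-1) = 5*g-2 := by omega
      have e2 : 2*p.1-1 + (2*p.2-1) + 1 = 2*g-1 := by omega
      rwa [e1, e2] at h3
    · apply EV.smul
      apply EV.sum
      intro p hp
      obtain ⟨hp1, hpg⟩ := hE1fact p hp
      apply EV.smul
      rcases Nat.eq_zero_or_pos p.2 with h0 | h0
      · rw [h0, hW0]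
        have hg2 : p.1 = g := by omega
        have h1 := EV_D2k_w hc (k := p.1) (by omega)
        exact h1.lift hc.hut (g-1) (by omega) (by omega)
      · have hW := (ih p.2 (by omega) h0).2
        have h1 := hW.D2k hc.hut hc.hy2 hc.hDw hc.hDy hc.hDt p.1
        exact h1.lift hc.hut (p.1-1) (by omega) (by omega)
  -- structure of B
  have hB : OD w y t (5*g-2) (2*g-1) B := by
    rw [hBdef, C6]
    apply OD.smul
    apply OD.add
    · apply OD.sum
      intro r hr
      obtain ⟨hr1, hr2, hrg⟩ := hE2fact r hr
      have h1 := (ih r.1 (by omega) (by omega)).2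
      have h2 := (ih r.2 (by omega) (by omega)).1
      have h3 := h1.mul_od h2
      have e1 : 5*r.1-1 + (5*r.2-1) = 5*g-2 := by omega
      have e2 : 2*r.1 + (2*r.2-1) = 2*g-1 := by omega
      rwa [e1, e2] at h3
    · apply OD.sum
      intro p hp
      obtain ⟨hp1, hpg⟩ := hE1fact p hp
      apply OD.sum
      intro r hr
      have hrsum : r.1 + r.2 = p.2 := Finset.HasAntidiagonal.mem_antidiagonal.mp hr
      apply OD.smul
      rcases Nat.eq_zero_or_pos r.2 with h20 | h20
      · rw [h20, hV0]
        have hv2 := OD_D2k_v hc (k := p.1) (by omega)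
        rcases Nat.eq_zero_or_pos r.1 with h10 | h10
        · rw [h10, hW0]
          have h3 := (EV_w hc).mul_od hv2
          exact h3.lift hc.hut (g-1) (by omega) (by omega)
        · have h1 := (ih r.1 (by omega) (by omega)).2
          have h3 := h1.mul_od hv2
          exact h3.lift hc.hut p.1 (by omega) (by omega)
      · have hV2 := ((ih r.2 (by omega) h20).1).D2k hc.hut hc.hy2 hc.hDw hc.hDy hc.hDt p.1
        rcases Nat.eq_zero_or_pos r.1 with h10 | h10
        · rw [h10, hW0]
          have h3 := (EV_w hc).mul_od hV2
          exact h3.lift hc.hut (p.1-1) (by omega) (by omega)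
        · have h1 := (ih r.1 (by omega) (by omega)).2
          have h3 := h1.mul_od hV2
          exact h3.lift hc.hut p.1 (by omega) (by omega)
  -- solve the linear system
  have huV : (1 - 108*w) * V g = y*A + 6*B := by
    linear_combination y*eq1 + 6*eq2 - (V g)*hc.hy2
  have huW : (1 - 108*w) * W g = 6*(w*A) + y*B := by
    linear_combination (6*w)*eq1 + y*eq2 - (W g)*hc.hy2
  have hsolV : V g = (y*A + 6*B)*t := by
    calc V g = ((1 - 108*w)*t) * V g := by rw [hc.hut, one_mul]
      _ = ((1 - 108*w) * V g)*t := by ring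
      _ = (y*A + 6*B)*t := by rw [huV]
  have hsolW : W g = (6*(w*A) + y*B)*t := by
    calc W g = ((1 - 108*w)*t) * W g := by rw [hc.hut, one_mul]
      _ = ((1 - 108*w) * W g)*t := by ring
      _ = (6*(w*A) + y*B)*t := by rw [huW]
  constructor
  · rw [hsolV]
    have h6B : OD w y t (5*g-2) (2*g-1) (6*B) := by rw [C6]; exact hB.smul 6
    have h1 := ((hA.ymul).add h6B).mul_t hc.hut
    have e : 5*g-2+1 = 5*g-1 := by omega
    rwa [e] at h1
  · rw [hsolW]
    have hwA : EV w t (5*g-2) (2*g) (w*A) := by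
      have h1 := (EV_w hc).mul hA
      have e1 : (0:ℕ) + (5*g-2) = 5*g-2 := by omega
      have e2 : 1 + (2*g-1) = 2*g := by omega
      rwa [e1, e2] at h1
    have h6wA : EV w t (5*g-2) (2*g) (6*(w*A)) := by rw [C6]; exact hwA.smul 6
    have hyB : EV w t (5*g-2) (2*g) (y*B) := by
      have h1 := hB.ymul hc.hy2
      have e : 2*g-1+1 = 2*g := by omega
      rwa [e] at h1
    have h1 := (h6wA.add hyB).mul_t hc.hut
    have e : 5*g-2+1 = 5*g-1 := by omega
    rwa [e] at h1

end Main

section Solve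

/-- Solving `S' (1-108X) + 108m·S = Q` on polynomials of bounded degree. -/
lemma poly_solve (m : ℕ) : ∀ d0 : ℕ, d0 < m → ∀ Q : Polynomial ℚ, Q.natDegree ≤ d0 →
    ∃ S : Polynomial ℚ, S.natDegree ≤ d0 ∧ evD m S = Q := by
  intro d0
  induction d0 with
  | zero =>
    intro hm Q hQ
    refine ⟨Polynomial.C (Q.coeff 0 / (108 * m)), by simp, ?_⟩
    have hQC : Q = Polynomial.C (Q.coeff 0) := Polynomial.eq_C_of_natDegree_le_zero hQ
    have hm0 : (108 * (m:ℚ)) ≠ 0 := by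
      have : (0:ℚ) < m := by exact_mod_cast hm
      positivity
    rw [evD, Polynomial.derivative_C]
    have h2 : 108 * (m:ℚ) * (Q.coeff 0 / (108 * m)) = Q.coeff 0 := by
      field_simp
    rw [← Polynomial.C_mul, h2, zero_mul, zero_add, ← hQC]
  | succ d ihd =>
    intro hm Q hQ
    set c : ℚ := Q.coeff (d+1) / (108 * ((m:ℚ) - (d+1))) with hc
    set S₁ : Polynomial ℚ := Polynomial.C c * Polynomial.X ^ (d+1) with hS1
    have hS1deg : S₁.natDegree ≤ d + 1 := by
      rw [hS1]
      refine le_trans Polynomial.natDegree_mul_le ?_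
      simp [Polynomial.natDegree_X_pow]
    have hmd : ((m:ℚ) - (d+1)) ≠ 0 := by
      have : (d+1 : ℚ) < m := by exact_mod_cast hm
      intro h; nlinarith
    -- coefficient of evD m S₁ at degree d+1
    have hcoeff : (evD m S₁).coeff (d+1) = Q.coeff (d+1) := by
      rw [evD, hS1]
      rw [Polynomial.derivative_C_mul_X_pow]
      have expand : Polynomial.C (c * (d+1:ℕ)) * Polynomial.X ^ (d+1-1) * (1 - 108 * Polynomial.X)
          + Polynomial.C (108 * (m:ℚ)) * (Polynomial.C c * Polynomial.X ^ (d+1))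
          = Polynomial.C (c * (d+1:ℕ)) * Polynomial.X ^ d
            - Polynomial.C (c * (d+1:ℕ) * 108) * Polynomial.X ^ (d+1)
            + Polynomial.C (108 * (m:ℚ) * c) * Polynomial.X ^ (d+1) := by
        have e : d + 1 - 1 = d := by omega
        rw [e]
        simp only [map_mul, map_ofNat, map_natCast]
        ring
      rw [expand]
      have h1 : ¬ (d + 1 = d) := by omega
      simp only [Polynomial.coeff_add, Polynomial.coeff_sub, Polynomial.coeff_C_mul,
        Polynomial.coeff_X_pow, if_neg h1, if_pos rfl, mul_zero, mul_one, zero_sub]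
      rw [hc]
      push_cast
      field_simp
      ring
    have hevDdeg : (evD m S₁).natDegree ≤ d + 1 := natDegree_evD hS1deg
    set Q' : Polynomial ℚ := Q - evD m S₁ with hQ'
    have hQ'deg : Q'.natDegree ≤ d := by
      rw [Polynomial.natDegree_le_iff_coeff_eq_zero]
      intro j hj
      rcases Nat.lt_or_ge (d+1) j with hj2 | hj2
      · rw [hQ', Polynomial.coeff_sub]
        rw [Polynomial.coeff_eq_zero_of_natDegree_lt (by omega),
          Polynomial.coeff_eq_zero_of_natDegree_lt (by omega)]
        ring
      · have : j = d+1 := by omega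
        rw [this, hQ', Polynomial.coeff_sub, hcoeff]
        ring
    obtain ⟨S₂, hS₂deg, hS₂⟩ := ihd (by omega) Q' hQ'deg
    refine ⟨S₁ + S₂, ?_, ?_⟩
    · refine le_trans (Polynomial.natDegree_add_le _ _) ?_
      exact max_le hS1deg (by omega)
    · have hlin : evD m (S₁ + S₂) = evD m S₁ + evD m S₂ := by
        rw [evD, evD, evD, Polynomial.derivative_add]
        ring
      rw [hlin, hS₂, hQ']
      ring

end Solve

section Setup

lemma D_sub (f g : ℚ⟦X⟧) : D (f - g) = D f - D g := by
  exact map_sub (PowerSeries.derivative ℚ) f g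

lemma D_natnum (n : ℕ) [n.AtLeastTwo] : D (OfNat.ofNat n : ℚ⟦X⟧) = 0 := by
  rw [show (OfNat.ofNat n : ℚ⟦X⟧) = ((n:ℕ) : ℚ⟦X⟧) from rfl]
  have := Derivation.map_natCast (PowerSeries.derivative ℚ) n
  exact this

lemma mk_ctx (v w : ℚ⟦X⟧) (hv0 : constantCoeff v = 0)
    (hv : 6 * (X : ℚ⟦X⟧) = (1 - 9 * v + 18 * v ^ 2) * v)
    (hw : w = X * (1 - 6 * v)⁻¹) :
    Ctx v w (1 - 6 * v) (1 - 108 * w)⁻¹ ∧ constantCoeff w = 0 := by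
  set y : ℚ⟦X⟧ := 1 - 6 * v with hydef
  have hcy : constantCoeff y = 1 := by
    rw [hydef]
    simp [hv0]
  have hynz : y ≠ 0 := by
    intro h
    rw [h] at hcy
    simp at hcy
  have hyinv : y * y⁻¹ = 1 := PowerSeries.mul_inv_cancel _ (by rw [hcy]; norm_num)
  have hwy : w * y = X := by
    rw [hw, hydef]
    calc X * (1 - 6*v)⁻¹ * (1 - 6*v) = X * ((1 - 6*v) * (1 - 6*v)⁻¹) := by ring
      _ = X := by rw [← hydef, hyinv, mul_one]
  have hcw : constantCoeff w = 0 := by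
    have h := congrArg (constantCoeff) hwy
    rw [map_mul, hcy, mul_one, PowerSeries.constantCoeff_X] at h
    exact h
  have hcu : constantCoeff (1 - 108 * w) = 1 := by simp [hcw]
  set t : ℚ⟦X⟧ := (1 - 108 * w)⁻¹ with htdef
  have hut : (1 - 108 * w) * t = 1 :=
    PowerSeries.mul_inv_cancel _ (by rw [hcu]; norm_num)
  have h6x : v - 9 * v ^ 2 + 18 * v ^ 3 = 6 * X := by linear_combination -hv
  have hy3 : (y * y) * y = (1 - 72 * w) * y := by
    rw [hydef]
    linear_combination (-12 : ℚ⟦X⟧) * h6x + 72 * hwy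
  have hy2 : y * y = 1 - 72 * w := mul_right_cancel₀ hynz hy3
  have huv : 1 - 108 * w = 1 - 18 * v + 54 * v ^ 2 := by
    refine mul_right_cancel₀ hynz ?_
    rw [hydef]
    linear_combination (-108 : ℚ⟦X⟧) * hwy + 18 * h6x
  -- derivative of v
  have hDsq : D (v ^ 2) = 2 * v * D v := by
    rw [pow_two, D_mul]; ring
  have hDcube : D (v ^ 3) = 3 * v ^ 2 * D v := by
    have : v ^ 3 = v ^ 2 * v := by ring
    rw [this, D_mul, hDsq]; ring
  have hD6x := congrArg D h6x
  have hL : D (v - 9 * v ^ 2 + 18 * v ^ 3) = (1 - 18 * v + 54 * v ^ 2) * D v := by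
    rw [show v - 9 * v ^ 2 + 18 * v ^ 3 = (v - 9 * v^2) + 18 * v^3 from rfl]
    rw [D_add, D_sub, D_mul, D_mul, hDsq, hDcube, D_natnum, D_natnum]
    ring
  have hR : D (6 * X) = 6 := by
    rw [D_mul, D_X, D_natnum]
    ring
  rw [hL, hR] at hD6x
  have hDveq : (1 - 108 * w) * D v = 6 := by rw [huv]; exact hD6x
  have hDv : D v = 6 * t := by
    calc D v = ((1 - 108 * w) * t) * D v := by rw [hut, one_mul]
      _ = t * ((1 - 108 * w) * D v) := by ring
      _ = t * 6 := by rw [hDveq]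
      _ = 6 * t := by ring
  have hDy : D y = -36 * t := by
    have hD1 : D (1 : ℚ⟦X⟧) = 0 := PowerSeries.derivativeFun_one
    rw [hydef, D_sub, hD1, D_mul, hDv, D_natnum]
    ring
  have hDw : D w = y * t := by
    have hDXeq := congrArg D hwy
    rw [D_mul, D_X, hDy] at hDXeq
    -- hDXeq : w * (-36 * t) + y * D w = 1
    have hstep : y * D w = 1 + 36 * (w * t) := by linear_combination hDXeq
    refine mul_left_cancel₀ hynz ?_
    calc y * D w = 1 + 36 * (w * t) := hstep
      _ = y * (y * t) := by linear_combination -t * hy2 - hut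
  have hDt : D t = 108 * y * t ^ 3 := by
    have h0 := congrArg D hut
    have hD1 : D (1 : ℚ⟦X⟧) = 0 := PowerSeries.derivativeFun_one
    rw [D_mul, hD1] at h0
    have hDu : D (1 - 108 * w) = -108 * (y * t) := by
      rw [D_sub, hD1, D_mul, hDw, D_natnum]
      ring
    rw [hDu] at h0
    -- h0 : (1 - 108*w) * D t + t * (-108*(y*t)) = 0
    have heq : (1 - 108 * w) * D t = 108 * (y * t) * t := by linear_combination h0
    calc D t = ((1 - 108 * w) * t) * D t := by rw [hut, one_mul]
      _ = t * ((1 - 108 * w) * D t) := by ring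
      _ = t * (108 * (y * t) * t) := by rw [heq]
      _ = 108 * y * t ^ 3 := by ring
  exact ⟨⟨hydef, hut, hy2, hDw, hDy, hDt, hDv⟩, hcw⟩

end Setup

theorem stmt4 (v w : PowerSeries ℚ) (hv0 : constantCoeff v = 0)
    (hv : 6 * (X : ℚ⟦X⟧) = (1 - 9 * v + 18 * v ^ 2) * v)
    (hw : w = X * (1 - 6 * v)⁻¹)
    (V W : ℕ → PowerSeries ℚ) (hV0 : V 0 = v) (hW0 : W 0 = w)
    (hVg : ∀ g, 1 ≤ g →
      V g = 3 * ∑ p ∈ Finset.HasAntidiagonal.antidiagonal g, V p.1 * V p.2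
        + 6 * ∑ p ∈ Finset.HasAntidiagonal.antidiagonal g,
            C (1 / ((4 : ℚ) ^ p.1 * (2 * p.1).factorial)) * D^[2 * p.1] (W p.2))
    (hWg : ∀ g, 1 ≤ g →
      W g = 6 * ∑ p ∈ Finset.HasAntidiagonal.antidiagonal g, ∑ r ∈ Finset.HasAntidiagonal.antidiagonal p.2,
            C (1 / ((4 : ℚ) ^ p.1 * (2 * p.1).factorial)) * (W r.1 * D^[2 * p.1] (V r.2)))
    (g : ℕ) (hg : 2 ≤ g) :
    ∃ S : Polynomial ℚ, S.natDegree ≤ 2 * g - 1 ∧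
      D (Polynomial.aeval w S * ((1 - 108 * w) ^ (5 * g - 3))⁻¹) =
        V g + ∑ k ∈ Finset.Icc 1 g,
          C ((-1) ^ k * (2 / (4 : ℚ) ^ k - 1) * bernoulli (2 * k) / (2 * k).factorial) *
            D^[2 * k] (V (g - k)) := by
  obtain ⟨hc, hcw⟩ := mk_ctx v w hv0 hv hw
  set y : ℚ⟦X⟧ := 1 - 6 * v with hydef
  set t : ℚ⟦X⟧ := (1 - 108 * w)⁻¹ with htdef
  have hstruct := struct_all hc hV0 hW0 hVg hWg
  -- structure of the right-hand side
  have hG : OD w y t (5 * g - 1) (2 * g - 1)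
      (V g + ∑ k ∈ Finset.Icc 1 g,
        C ((-1) ^ k * (2 / (4 : ℚ) ^ k - 1) * bernoulli (2 * k) / (2 * k).factorial) *
          D^[2 * k] (V (g - k))) := by
    apply OD.add (hstruct g (by omega)).1
    apply OD.sum
    intro k hk
    obtain ⟨hk1, hkg⟩ := Finset.mem_Icc.mp hk
    apply OD.smul
    rcases Nat.lt_or_ge k g with hklt | hkge
    · have h1 := ((hstruct (g - k) (by omega)).1).D2k hc.hut hc.hy2 hc.hDw hc.hDy hc.hDt k
      exact h1.lift hc.hut k (by omega) (by omega)
    · have hkg' : k = g := by omega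
      have h0 : g - k = 0 := by omega
      rw [h0, hV0]
      have h1 := OD_D2k_v hc (k := k) (by omega)
      exact h1.lift hc.hut g (by omega) (by omega)
  obtain ⟨Q, hQdeg, hQeq⟩ := hG
  obtain ⟨S, hSdeg, hSsolve⟩ := poly_solve (5 * g - 3) (2 * g - 1) (by omega) Q hQdeg
  refine ⟨S, hSdeg, ?_⟩
  have hpowinv : ((1 - 108 * w) ^ (5 * g - 3))⁻¹ = t ^ (5 * g - 3) := by
    have hcup : constantCoeff ((1 - 108 * w) ^ (5 * g - 3)) ≠ 0 := by
      rw [map_pow]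
      have : constantCoeff (1 - 108 * w) = 1 := by simp [hcw]
      rw [this, one_pow]
      norm_num
    rw [PowerSeries.inv_eq_iff_mul_eq_one hcup]
    rw [← mul_pow]
    have : t * (1 - 108 * w) = 1 := by rw [mul_comm]; exact hc.hut
    rw [this, one_pow]
  rw [hpowinv, D_ev_eq hc.hut hc.hDw hc.hDt (5 * g - 3) S, hSsolve]
  have e : 5 * g - 3 + 2 = 5 * g - 1 := by omega
  rw [e, ← hQeq]
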